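/- Let d ≥ 2 and consider 2d points on the d-dimensional moment curve with distinct parameters, colored red and blue with d points of each color, where the point with smallest parameter is red. The two (d−1)-simplices spanned by the red points and by the blue points have intersecting relative interiors if and only if the sequence of colors (in increasing parameter order) contains an alternating subsequence of length d+2. -/

import Mathlib

/-- The point on the d-dimensional moment curve with parameter t. -/
def momentCurve (d : ℕ) (t : ℝ) : Fin d → ℝ := fun j => t ^ ((j : ℕ) + 1)

open Finset Polynomial Set



lemma sum_mul_eval {n d : ℕ} (s c : Fin n → ℝ)
    (hdep : ∀ j : ℕ, j ≤ d → ∑ k, c k * s k ^ j = 0)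
    (q : Polynomial ℝ) (hq : q.natDegree ≤ d) :
    ∑ k, c k * q.eval (s k) = 0 := by
  have he : ∀ k, q.eval (s k) = ∑ j ∈ range (d + 1), q.coeff j * s k ^ j := fun k =>
    Polynomial.eval_eq_sum_range' (lt_of_le_of_lt hq (Nat.lt_succ_self d)) (s k)
  simp_rw [he, Finset.mul_sum]
  rw [Finset.sum_comm]
  refine Finset.sum_eq_zero fun j hj => ?_
  have h0 := hdep j (Nat.lt_succ_iff.mp (Finset.mem_range.mp hj))
  calc ∑ k, c k * (q.coeff j * s k ^ j) = q.coeff j * ∑ k, c k * s k ^ j := by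
        rw [Finset.mul_sum]; exact Finset.sum_congr rfl fun k _ => by ring
    _ = 0 := by rw [h0, mul_zero]

lemma dep_vanish {n d : ℕ} (hn : n ≤ d + 1) (s c : Fin n → ℝ) (hs : Function.Injective s)
    (hdep : ∀ j : ℕ, j ≤ d → ∑ k, c k * s k ^ j = 0) : ∀ k, c k = 0 := by
  intro k
  set q : Polynomial ℝ := ∏ l ∈ univ.erase k, (X - C (s l)) with hq
  have hdeg : q.natDegree ≤ d := by
    have h1 : q.natDegree = (univ.erase k).card := by
      rw [hq, Polynomial.natDegree_prod _ _ (fun l _ => Polynomial.X_sub_C_ne_zero (s l))]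
      simp [Polynomial.natDegree_X_sub_C]
    rw [h1, Finset.card_erase_of_mem (mem_univ k), Finset.card_univ, Fintype.card_fin]
    omega
  have h0 := sum_mul_eval s c hdep q hdeg
  have heval : ∀ l, l ≠ k → q.eval (s l) = 0 := by
    intro l hl
    rw [hq, Polynomial.eval_prod]
    exact Finset.prod_eq_zero (Finset.mem_erase.mpr ⟨hl, mem_univ l⟩) (by simp)
  rw [Finset.sum_eq_single k (fun l _ hl => by rw [heval l hl, mul_zero]) (by simp)] at h0
  have hne : q.eval (s k) ≠ 0 := by
    rw [hq, Polynomial.eval_prod]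
    refine Finset.prod_ne_zero_iff.mpr fun l hl => ?_
    simp only [Polynomial.eval_sub, Polynomial.eval_X, Polynomial.eval_C]
    exact sub_ne_zero_of_ne fun h => (Finset.mem_erase.mp hl).1 (hs h.symm)
  rcases mul_eq_zero.mp h0 with h | h
  · exact h
  · exact absurd h hne


lemma alternating_of_dep {d n : ℕ} (hn : 0 < n) (s : ℕ → ℝ)
    (hs : ∀ i j : ℕ, i < j → j < n → s i < s j)
    (c : ℕ → ℝ) (hc : ∀ i, i < n → c i ≠ 0)
    (hdep : ∀ q : Polynomial ℝ, q.natDegree ≤ d → ∑ i ∈ range n, c i * q.eval (s i) = 0) :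
    ∃ g : Fin (d + 2) → ℕ, StrictMono g ∧ (∀ k, g k < n) ∧
      ∀ k : Fin (d + 1), c (g k.castSucc) * c (g k.succ) < 0 := by
  classical
  set D : Finset ℕ := (range (n - 1)).filter (fun j => c j * c (j + 1) < 0) with hD
  set φ : ℕ → ℕ := fun i => (D.filter (· < i)).card with hφ
  set m : ℕ := D.card with hm
  have hDsub : ∀ j ∈ D, j + 1 < n := by
    intro j hj
    have := Finset.mem_range.mp (Finset.mem_filter.mp hj).1
    omega
  have hφmono : Monotone φ := by
    intro a b hab
    exact Finset.card_le_card (Finset.monotone_filter_right D (fun j _ hj => lt_of_lt_of_le hj hab))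
  have hφ0 : φ 0 = 0 := by
    show (D.filter (· < 0)).card = 0
    rw [Finset.card_eq_zero, Finset.filter_eq_empty_iff]
    intro j _; omega
  have hφle : ∀ i, φ i ≤ m := fun i => Finset.card_le_card (Finset.filter_subset _ _)
  have hφtop : φ (n - 1) = m := by
    simp only [hφ, hm]
    congr 1
    rw [Finset.filter_eq_self]
    intro j hj
    have := hDsub j hj
    omega
  have hφstep : ∀ i, φ (i + 1) = φ i + (if i ∈ D then 1 else 0) := by
    intro i
    simp only [hφ]
    by_cases hi : i ∈ D
    · rw [if_pos hi]
      have : D.filter (· < i + 1) = insert i (D.filter (· < i)) := by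
        ext j
        simp only [Finset.mem_filter, Finset.mem_insert]
        constructor
        · rintro ⟨h1, h2⟩
          rcases Nat.lt_succ_iff_lt_or_eq.mp h2 with h | h
          · exact Or.inr ⟨h1, h⟩
          · exact Or.inl h
        · rintro (rfl | ⟨h1, h2⟩)
          · exact ⟨hi, Nat.lt_succ_self _⟩
          · exact ⟨h1, Nat.lt_succ_of_lt h2⟩
      rw [this, Finset.card_insert_of_notMem (by simp)]
    · rw [if_neg hi]
      have : D.filter (· < i + 1) = D.filter (· < i) := by
        ext j
        simp only [Finset.mem_filter]
        constructor
        · rintro ⟨h1, h2⟩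
          refine ⟨h1, ?_⟩
          rcases Nat.lt_succ_iff_lt_or_eq.mp h2 with h | h
          · exact h
          · exact absurd (h ▸ h1) hi
        · rintro ⟨h1, h2⟩
          exact ⟨h1, Nat.lt_succ_of_lt h2⟩
      rw [this, Nat.add_zero]
  -- sign lemma
  have hsign : ∀ i, i < n → 0 < ((-1 : ℝ) ^ (φ i) * c i) * c 0 := by
    intro i
    induction i with
    | zero =>
      intro h0
      rw [hφ0, pow_zero, one_mul]
      exact mul_self_pos.mpr (hc 0 h0)
    | succ i ih =>
      intro hi1
      have hi : i < n := Nat.lt_of_succ_lt hi1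
      have h1 := ih hi
      have hci := hc i hi
      have hci1 := hc (i + 1) hi1
      rw [hφstep i]
      by_cases hiD : i ∈ D
      · have h2 : c i * c (i + 1) < 0 := (Finset.mem_filter.mp hiD).2
        rw [if_pos hiD, pow_succ]
        nlinarith [mul_pos h1 (neg_pos.mpr h2), sq_nonneg (c i)]
      · have h2 : 0 < c i * c (i + 1) := by
          rcases lt_or_gt_of_ne (mul_ne_zero hci hci1) with h | h
          · exact absurd (Finset.mem_filter.mpr ⟨Finset.mem_range.mpr (by omega), h⟩) hiD
          · exact h
        rw [if_neg hiD, Nat.add_zero]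
        nlinarith [mul_pos h1 h2, sq_nonneg (c i)]
  by_cases hcase : m ≤ d
  · -- contradiction via polynomial
    exfalso
    set r : ℕ → ℝ := fun j => (s j + s (j + 1)) / 2 with hr
    set q : Polynomial ℝ := ∏ j ∈ D, (X - C (r j)) with hq
    have hdeg : q.natDegree ≤ d := by
      rw [hq, Polynomial.natDegree_prod _ _ (fun j _ => Polynomial.X_sub_C_ne_zero (r j))]
      simp only [Polynomial.natDegree_X_sub_C]
      rw [Finset.sum_const, smul_eq_mul, mul_one]
      exact hcase
    have hqpos : ∀ i, i < n → 0 < (-1 : ℝ) ^ (m - φ i) * q.eval (s i) := by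
      intro i hi
      rw [hq, Polynomial.eval_prod]
      simp only [Polynomial.eval_sub, Polynomial.eval_X, Polynomial.eval_C]
      rw [← Finset.prod_filter_mul_prod_filter_not D (· < i)]
      have hpos : 0 < ∏ j ∈ D.filter (· < i), (s i - r j) := by
        refine Finset.prod_pos fun j hj => ?_
        have hjD := (Finset.mem_filter.mp hj).1
        have hji := (Finset.mem_filter.mp hj).2
        have hj1 : j + 1 < n := hDsub j hjD
        have hrj : r j < s (j + 1) := by
          have := hs j (j + 1) (Nat.lt_succ_self j) hj1
          rw [hr]; dsimp only; linarith
        have : s (j + 1) ≤ s i := by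
          rcases Nat.lt_or_ge (j + 1) i with h | h
          · exact le_of_lt (hs (j + 1) i h hi)
          · have : j + 1 = i := by omega
            rw [this]
        linarith
      have hneg : ∀ j ∈ D.filter (fun j => ¬ j < i), s i - r j = (-1) * (r j - s i) := by
        intro j _; ring
      rw [Finset.prod_congr rfl hneg, Finset.prod_mul_distrib, Finset.prod_const]
      have hcard : (D.filter (fun j => ¬ j < i)).card = m - φ i := by
        have h5 := Finset.card_filter_add_card_filter_not (s := D) (p := (· < i))
        have h6 : φ i = (D.filter (· < i)).card := rfl
        have h7 : m = D.card := rfl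
        have h8 : (D.filter (fun a => ¬ (fun x => x < i) a)).card
            = (D.filter (fun j => ¬ j < i)).card := rfl
        omega
      rw [hcard]
      have hpos2 : 0 < ∏ j ∈ D.filter (fun j => ¬ j < i), (r j - s i) := by
        refine Finset.prod_pos fun j hj => ?_
        have hjD := (Finset.mem_filter.mp hj).1
        have hji : i ≤ j := Nat.le_of_not_lt (Finset.mem_filter.mp hj).2
        have hj1 : j + 1 < n := hDsub j hjD
        have hrj : s j < r j := by
          have := hs j (j + 1) (Nat.lt_succ_self j) hj1
          rw [hr]; dsimp only; linarith
        have : s i ≤ s j := by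
          rcases Nat.lt_or_ge i j with h | h
          · exact le_of_lt (hs i j h (by omega))
          · have : i = j := by omega
            rw [this]
        linarith
      calc (0 : ℝ) < ((-1) ^ (m - φ i) * (-1) ^ (m - φ i)) *
            (∏ j ∈ D.filter (· < i), (s i - r j)) *
            (∏ j ∈ D.filter (fun j => ¬ j < i), (r j - s i)) := by
            have : ((-1 : ℝ) ^ (m - φ i) * (-1) ^ (m - φ i)) = 1 := by
              rw [← pow_add, ← two_mul, pow_mul, neg_one_sq, one_pow]
            rw [this, one_mul]
            exact mul_pos hpos hpos2
        _ = (-1) ^ (m - φ i) * ((∏ j ∈ D.filter (· < i), (s i - r j)) *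
            ((-1) ^ (m - φ i) * ∏ j ∈ D.filter (fun j => ¬ j < i), (r j - s i))) := by ring
    have hQdeg : (C ((-1 : ℝ) ^ m * c 0) * q).natDegree ≤ d :=
      le_trans (Polynomial.natDegree_C_mul_le _ _) hdeg
    have h0 := hdep _ hQdeg
    have hterm : ∀ i ∈ range n, 0 < c i * ((C ((-1 : ℝ) ^ m * c 0) * q).eval (s i)) := by
      intro i hi
      have hi' : i < n := Finset.mem_range.mp hi
      rw [Polynomial.eval_mul, Polynomial.eval_C]
      have h1 := hsign i hi'
      have h2 := hqpos i hi'
      have key : c i * ((-1 : ℝ) ^ m * c 0 * q.eval (s i)) =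
          (((-1) ^ (φ i) * c i) * c 0) * ((-1) ^ (m - φ i) * q.eval (s i)) := by
        have hphile := hφle i
        have : (-1 : ℝ) ^ m = (-1) ^ (φ i) * (-1) ^ (m - φ i) := by
          rw [← pow_add]
          congr 1
          omega
        rw [this]; ring
      rw [key]
      exact mul_pos h1 h2
    have : 0 < ∑ i ∈ range n, c i * ((C ((-1 : ℝ) ^ m * c 0) * q).eval (s i)) :=
      Finset.sum_pos hterm ⟨0, Finset.mem_range.mpr hn⟩
    rw [h0] at this
    exact lt_irrefl 0 this
  · -- build alternating subsequence
    push_neg at hcase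
    have hattain : ∀ k, k ≤ m → ∃ i, i < n ∧ φ i = k := by
      intro k hk
      have hex : ∃ i, k ≤ φ i := ⟨n - 1, hφtop ▸ hk⟩
      set i := Nat.find hex with hi
      have hki : k ≤ φ i := Nat.find_spec hex
      have hile : i ≤ n - 1 := Nat.find_min' hex (hφtop ▸ hk)
      refine ⟨i, by omega, ?_⟩
      rcases Nat.eq_zero_or_pos i with h0 | h0
      · rw [h0] at hki ⊢
        rw [hφ0] at hki ⊢
        omega
      · have hprev : ¬ k ≤ φ (i - 1) := Nat.find_min hex (by omega)
        have := hφstep (i - 1)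
        have hi1 : i - 1 + 1 = i := by omega
        rw [hi1] at this
        by_cases hD1 : (i - 1) ∈ D <;> simp [hD1] at this <;> omega
    have hm' : d + 1 ≤ m := hcase
    choose gi hgi1 hgi2 using hattain
    have hk' : ∀ k : Fin (d + 2), (k : ℕ) ≤ m := fun k => by omega
    refine ⟨fun k => gi k.val (hk' k), ?_, fun k => hgi1 k.val (hk' k), ?_⟩
    · intro a b hab
      by_contra hle
      push_neg at hle
      have h9 := hφmono hle
      rw [hgi2 a.val (hk' a), hgi2 b.val (hk' b)] at h9
      have hab' : (a : ℕ) < b := hab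
      omega
    · intro k
      dsimp only
      have h1 := hsign _ (hgi1 k.castSucc.val (hk' k.castSucc))
      have h2 := hsign _ (hgi1 k.succ.val (hk' k.succ))
      rw [hgi2 k.castSucc.val (hk' k.castSucc)] at h1
      rw [hgi2 k.succ.val (hk' k.succ)] at h2
      set x := c (gi k.castSucc.val (hk' k.castSucc)) with hx
      set y := c (gi k.succ.val (hk' k.succ)) with hy
      have hval : (k.succ.val : ℕ) = k.castSucc.val + 1 := by
        simp [Fin.val_succ, Fin.coe_castSucc]
      have hpow : ((-1 : ℝ)) ^ (k.succ.val : ℕ) = -((-1 : ℝ) ^ (k.castSucc.val : ℕ)) := by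
        rw [hval, pow_succ]; ring
      rw [hpow] at h2
      set A : ℝ := (-1) ^ (k.castSucc.val : ℕ) with hA
      have hA2 : A * A = 1 := by
        rw [hA, ← pow_add, ← two_mul, pow_mul, neg_one_sq, one_pow]
      have hP := mul_pos h1 h2
      have heq : (A * x * c 0) * (-A * y * c 0) = (A * A) * (-(x * y)) * (c 0 * c 0) := by ring
      rw [heq, hA2, one_mul] at hP
      have hc0 : 0 < c 0 * c 0 := mul_self_pos.mpr (hc 0 hn)
      nlinarith
open Finset Polynomial

lemma strictMono_le_apply {n : ℕ} (g : Fin n → ℕ) (hg : StrictMono g) :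
    ∀ k : Fin n, (k : ℕ) ≤ g k := by
  have key : ∀ v : ℕ, ∀ h : v < n, v ≤ g ⟨v, h⟩ := by
    intro v
    induction v with
    | zero => intro h; exact Nat.zero_le _
    | succ v ih =>
      intro h
      have hv : v < n := by omega
      have hlt : (⟨v, hv⟩ : Fin n) < ⟨v + 1, h⟩ := by
        simp [Fin.lt_def]
      have := hg hlt
      have := ih hv
      omega
  intro k
  have := key k.val k.isLt
  simpa using this

lemma strictMono_fin_eq_id {n : ℕ} (g : Fin n → ℕ) (hg : StrictMono g) (hb : ∀ k, g k < n) :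
    ∀ k : Fin n, g k = (k : ℕ) := by
  have h1 := strictMono_le_apply g hg
  -- reversed function
  have h2 : ∀ k : Fin n, g k ≤ (k : ℕ) := by
    intro k
    set g' : Fin n → ℕ := fun j => (n - 1) - g j.rev with hg'
    have hg'mono : StrictMono g' := by
      intro a b hab
      have hr : b.rev < a.rev := Fin.rev_lt_rev.mpr hab
      have := hg hr
      have ha := hb a.rev
      have hbb := hb b.rev
      simp only [hg']
      omega
    have := strictMono_le_apply g' hg'mono k.rev
    simp only [hg', Fin.rev_rev] at this
    have hrev : (k.rev : ℕ) = n - 1 - k := by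
      rcases k with ⟨kv, hk⟩
      simp [Fin.rev]
      omega
    rw [hrev] at this
    have := hb k
    have hkn : (k : ℕ) < n := k.isLt
    omega
  exact fun k => le_antisymm (h2 k) (h1 k)

noncomputable def spread {m N : ℕ} (g : Fin m → Fin N) (w : Fin m → ℝ) : Fin N → ℝ :=
  fun i => ∑ k, if g k = i then w k else 0

lemma spread_apply_mem {m N : ℕ} {g : Fin m → Fin N} (hg : Function.Injective g)
    (w : Fin m → ℝ) (k : Fin m) : spread g w (g k) = w k := by
  rw [spread, Finset.sum_eq_single k (fun l _ hl => if_neg (fun h => hl (hg h))) (by simp)]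
  rw [if_pos rfl]

lemma spread_apply_not_mem {m N : ℕ} {g : Fin m → Fin N} (w : Fin m → ℝ) {i : Fin N}
    (h : ∀ k, g k ≠ i) : spread g w i = 0 := by
  rw [spread]
  exact Finset.sum_eq_zero fun k _ => if_neg (h k)

lemma sum_spread_mul {m N : ℕ} (g : Fin m → Fin N) (w : Fin m → ℝ) (F : Fin N → ℝ) :
    ∑ i, spread g w i * F i = ∑ k, w k * F (g k) := by
  simp only [spread, Finset.sum_mul]
  rw [Finset.sum_comm]
  refine Finset.sum_congr rfl fun k _ => ?_
  have : ∀ i : Fin N, (if g k = i then w k else 0) * F i = if g k = i then w k * F i else 0 := by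
    intro i; split <;> simp
  simp_rw [this]
  rw [Finset.sum_ite_eq]
  simp

lemma exists_circuit {d : ℕ} (s : Fin (d + 2) → ℝ) (hs : StrictMono s) :
    ∃ w : Fin (d + 2) → ℝ, (∀ j : ℕ, j ≤ d → ∑ k, w k * s k ^ j = 0) ∧ (∀ k, w k ≠ 0) ∧
      ∀ k : Fin (d + 1), w k.castSucc * w k.succ < 0 := by
  classical
  -- nonzero kernel element
  set M : Matrix (Fin (d + 1)) (Fin (d + 2)) ℝ := fun j k => s k ^ (j : ℕ) with hM
  have hnoninj : ¬ Function.Injective M.mulVecLin := by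
    intro hinj
    have := LinearMap.finrank_le_finrank_of_injective hinj
    simp [Module.finrank_pi] at this
  rw [Function.not_injective_iff] at hnoninj
  obtain ⟨x, y, hxy, hne⟩ := hnoninj
  set w : Fin (d + 2) → ℝ := x - y with hw
  have hw0 : w ≠ 0 := sub_ne_zero_of_ne hne
  have hker : M.mulVecLin w = 0 := by
    rw [hw, map_sub, hxy, sub_self]
  have hdep : ∀ j : ℕ, j ≤ d → ∑ k, w k * s k ^ j = 0 := by
    intro j hj
    have := congrFun hker ⟨j, by omega⟩
    simp only [Matrix.mulVecLin_apply, Matrix.mulVec, dotProduct, Pi.zero_apply, hM] at this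
    rw [← this]
    exact Finset.sum_congr rfl fun k _ => by ring
  -- all entries nonzero
  have hnz : ∀ k, w k ≠ 0 := by
    intro k0 hk0
    apply hw0
    have hvanish : ∀ l : Fin (d + 1), w (k0.succAbove l) = 0 := by
      refine dep_vanish (le_refl (d + 1)) (s ∘ k0.succAbove) (w ∘ k0.succAbove)
        (hs.injective.comp (Fin.succAbove_right_injective)) ?_
      intro j hj
      have := hdep j hj
      rw [Fin.sum_univ_succAbove (fun k => w k * s k ^ j) k0, hk0, zero_mul, zero_add] at this
      exact this
    funext k
    simp only [Pi.zero_apply]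
    rcases eq_or_ne k k0 with rfl | hkk
    · exact hk0
    · obtain ⟨l, rfl⟩ := Fin.exists_succAbove_eq hkk
      exact hvanish l
  refine ⟨w, hdep, hnz, ?_⟩
  -- alternation via alternating_of_dep
  set sN : ℕ → ℝ := fun i => if h : i < d + 2 then s ⟨i, h⟩ else 0 with hsN
  set cN : ℕ → ℝ := fun i => if h : i < d + 2 then w ⟨i, h⟩ else 0 with hcN
  obtain ⟨g, hgmono, hgb, hgalt⟩ := alternating_of_dep (d := d) (n := d + 2) (by omega) sN
    (fun i j hij hj => by
      simp only [hsN]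
      rw [dif_pos (lt_trans hij hj), dif_pos hj]
      exact hs hij)
    cN
    (fun i hi => by simp only [hcN]; rw [dif_pos hi]; exact hnz _)
    (by
      intro q hq
      have hconv : ∑ i ∈ range (d + 2), cN i * q.eval (sN i)
          = ∑ k : Fin (d + 2), w k * q.eval (s k) := by
        rw [Finset.sum_range fun i => cN i * q.eval (sN i)]
        refine Finset.sum_congr rfl fun k _ => ?_
        simp only [hcN, hsN]
        rw [dif_pos k.isLt, dif_pos k.isLt]
      rw [hconv]
      exact sum_mul_eval s w hdep q hq)
  have hgid := strictMono_fin_eq_id g hgmono hgb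
  intro k
  have := hgalt k
  rw [hgid k.castSucc, hgid k.succ] at this
  simp only [hcN] at this
  rw [dif_pos k.castSucc.isLt, dif_pos k.succ.isLt] at this
  exact this

theorem intrinsicInterior_eq_interior_of_affineSpan_top {E : Type*} [NormedAddCommGroup E]
    [NormedSpace ℝ E] {s : Set E} (h : affineSpan ℝ s = ⊤) :
    intrinsicInterior ℝ s = interior s := by
  refine Set.Subset.antisymm ?_ interior_subset_intrinsicInterior
  rintro x ⟨y, hy, rfl⟩
  rw [mem_interior] at hy ⊢
  obtain ⟨U, hUs, hUo, hyU⟩ := hy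
  obtain ⟨U', hU'o, rfl⟩ := isOpen_induced_iff.mp hUo
  refine ⟨U', fun z hz => ?_, hU'o, hyU⟩
  have hz' : z ∈ affineSpan ℝ s := h ▸ AffineSubspace.mem_top ℝ E z
  exact hUs (show (⟨z, hz'⟩ : affineSpan ℝ s) ∈ _ from hz)

theorem intrinsicInterior_simplex {E : Type*} [NormedAddCommGroup E] [NormedSpace ℝ E]
    [FiniteDimensional ℝ E] {ι : Type*} [Fintype ι] [Nonempty ι] {p : ι → E}
    (hp : AffineIndependent ℝ p) :
    intrinsicInterior ℝ (convexHull ℝ (Set.range p)) =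
      {x | ∃ w : ι → ℝ, (∀ i, 0 < w i) ∧ ∑ i, w i = 1 ∧ ∑ i, w i • p i = x} := by
  classical
  obtain ⟨i₀⟩ := ‹Nonempty ι›
  set q : ι → E := fun i => p i - p i₀ with hqdef
  have hq : AffineIndependent ℝ q := by
    rw [affineIndependent_iff] at hp ⊢
    intro s w hw hcomb
    apply hp s w hw
    have hexp : ∑ e ∈ s, w e • q e = ∑ e ∈ s, w e • p e - (∑ e ∈ s, w e) • p i₀ := by
      rw [Finset.sum_smul, ← Finset.sum_sub_distrib]
      exact Finset.sum_congr rfl fun e _ => by rw [hqdef, smul_sub]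
    rw [hexp, hw, zero_smul, sub_zero] at hcomb
    exact hcomb
  set W : Submodule ℝ E := Submodule.span ℝ (Set.range q) with hWdef
  set q' : ι → W := fun i => ⟨q i, Submodule.subset_span ⟨i, rfl⟩⟩ with hq'def
  have hvalq : (Subtype.val : W → E) ∘ q' = q := rfl
  have hq' : AffineIndependent ℝ q' := by
    apply AffineIndependent.of_comp (W.subtype.toAffineMap)
    exact hq
  have hspan' : Submodule.span ℝ (Set.range q') = ⊤ := by
    rw [eq_top_iff]
    rintro ⟨z, hz⟩ -
    refine Submodule.span_induction
      (p := fun v hv => (⟨v, hv⟩ : W) ∈ Submodule.span ℝ (Set.range q'))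
      ?_ ?_ ?_ ?_ hz
    · rintro v ⟨i, rfl⟩
      exact Submodule.subset_span ⟨i, rfl⟩
    · exact Submodule.zero_mem _
    · intro v u hv hu hv' hu'
      exact Submodule.add_mem _ hv' hu'
    · intro a v hv hv'
      exact Submodule.smul_mem _ a hv'
  have htot : affineSpan ℝ (Set.range q') = ⊤ := by
    rw [AffineSubspace.affineSpan_eq_top_iff_vectorSpan_eq_top_of_nonempty ℝ W W
      (Set.range_nonempty _)]
    rw [eq_top_iff, ← hspan', Submodule.span_le]
    rintro v ⟨i, rfl⟩
    have h0 : q' i₀ = 0 := by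
      simp only [hq'def, hqdef]
      exact Subtype.ext (by simp)
    have h1 : q' i -ᵥ q' i₀ ∈ vectorSpan ℝ (Set.range q') :=
      vsub_mem_vectorSpan ℝ (Set.mem_range_self i) (Set.mem_range_self i₀)
    rwa [vsub_eq_sub, h0, sub_zero] at h1
  set b : AffineBasis ι ℝ W := ⟨q', hq', htot⟩ with hbdef
  have hbcoe : ⇑b = q' := rfl
  have hIntS : interior (convexHull ℝ (Set.range q')) = {y : W | ∀ i, 0 < b.coord i y} := by
    rw [← hbcoe]; exact b.interior_convexHull
  set φ : W →ᵃⁱ[ℝ] E := W.subtypeₗᵢ.toAffineIsometry with hφdef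
  have hφcoe : ⇑φ = Subtype.val := rfl
  set τ : E ≃ᵃⁱ[ℝ] E := AffineIsometryEquiv.constVAdd ℝ E (p i₀) with hτdef
  have hτcoe : ∀ x : E, τ.toAffineIsometry x = p i₀ + x := fun x => rfl
  have e1 : ⇑τ.toAffineIsometry.toAffineMap = ⇑τ.toAffineIsometry := rfl
  have e2 : ⇑φ.toAffineMap = ⇑φ := rfl
  have him1 : ∀ X : Set E,
      ⇑τ.toAffineIsometry '' (convexHull ℝ X) = convexHull ℝ (⇑τ.toAffineIsometry '' X) := by
    intro X
    rw [← e1]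
    exact τ.toAffineIsometry.toAffineMap.image_convexHull X
  have him2 : ∀ X : Set W, ⇑φ '' (convexHull ℝ X) = convexHull ℝ (⇑φ '' X) := by
    intro X
    rw [← e2]
    exact φ.toAffineMap.image_convexHull X
  have hcompose : (⇑τ.toAffineIsometry ∘ ((Subtype.val : W → E) ∘ q')) = p := by
    funext i
    rw [Function.comp_apply, Function.comp_apply]
    show p i₀ + (p i - p i₀) = p i
    rw [add_comm]
    exact sub_add_cancel _ _
  have himg : Set.range p = ⇑τ.toAffineIsometry '' (⇑φ '' Set.range q') := by
    rw [hφcoe, ← Set.range_comp, ← Set.range_comp, hcompose]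
  have hchain : intrinsicInterior ℝ (convexHull ℝ (Set.range p)) =
      ⇑τ.toAffineIsometry '' (⇑φ '' {y : W | ∀ i, 0 < b.coord i y}) := by
    rw [himg, ← him1, ← him2, τ.toAffineIsometry.image_intrinsicInterior,
      φ.image_intrinsicInterior,
      intrinsicInterior_eq_interior_of_affineSpan_top
        (by rw [affineSpan_convexHull]; exact htot), hIntS]
  rw [hchain]
  ext x
  simp only [Set.mem_image, Set.mem_setOf_eq]
  constructor
  · rintro ⟨_, ⟨y, hy, rfl⟩, rfl⟩
    refine ⟨fun i => b.coord i y, hy, b.sum_coord_apply_eq_one y, ?_⟩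
    have hcomb := b.linear_combination_coord_eq_self y
    have hval : ((∑ i, b.coord i y • b i : W) : E) = ∑ i, b.coord i y • q i := by
      push_cast
      rfl
    rw [hcomb] at hval
    rw [hφcoe, hτcoe]
    have hexp : ∑ i, b.coord i y • p i
        = ∑ i, b.coord i y • q i + (∑ i, b.coord i y) • p i₀ := by
      rw [Finset.sum_smul, ← Finset.sum_add_distrib]
      refine Finset.sum_congr rfl fun i _ => ?_
      rw [hqdef, smul_sub]
      abel
    show ∑ i, b.coord i y • p i = p i₀ + (y : E)
    rw [hexp, ← hval, b.sum_coord_apply_eq_one y, one_smul, add_comm]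
  · rintro ⟨w, hwpos, hwsum, hwcomb⟩
    set y : W := ∑ i, w i • q' i with hydef
    refine ⟨φ y, ⟨y, ?_, rfl⟩, ?_⟩
    · intro i
      have hcomb : Finset.univ.affineCombination ℝ q' w = y := by
        rw [Finset.univ.affineCombination_eq_linear_combination q' w hwsum, hydef]
      have hco := b.coord_apply_combination_of_mem (Finset.mem_univ i) hwsum
      rw [hbcoe] at hco
      rw [hcomb] at hco
      rw [hco]
      exact hwpos i
    · rw [hφcoe, hτcoe]
      have hval : ((∑ i, w i • q' i : W) : E) = ∑ i, w i • q i := by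
        push_cast
        rfl
      have hexp : ∑ i, w i • q i = ∑ i, w i • p i - (∑ i, w i) • p i₀ := by
        rw [Finset.sum_smul, ← Finset.sum_sub_distrib]
        exact Finset.sum_congr rfl fun i _ => by rw [hqdef, smul_sub]
      show p i₀ + (y : E) = x
      rw [hydef, hval, hexp, hwsum, one_smul, hwcomb, add_comm]
      exact sub_add_cancel _ _

lemma sign_flip {a b : ℝ} (h : a * b < 0) : (0 < a ↔ ¬ 0 < b) := by
  rcases mul_neg_iff.mp h with ⟨ha, hb⟩ | ⟨ha, hb⟩
  · exact iff_of_true ha (not_lt.mpr (le_of_lt hb))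
  · exact iff_of_false (not_lt.mpr (le_of_lt ha)) (not_not_intro hb)

lemma momentAffineIndep {d n : ℕ} {t : Fin n → ℝ} (ht : StrictMono t)
    (S : Finset (Fin n)) (hS : S.card ≤ d + 1) :
    AffineIndependent ℝ (fun i : {x // x ∈ S} => momentCurve d (t i.val)) := by
  classical
  rw [affineIndependent_iff]
  intro s w hw hcomb
  set w' : {x // x ∈ S} → ℝ := fun i => if i ∈ s then w i else 0 with hw'def
  have hsum' : ∀ G : {x // x ∈ S} → ℝ, ∑ i, w' i * G i = ∑ i ∈ s, w i * G i := by
    intro G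
    conv_rhs => rw [← Finset.univ_inter s, ← Finset.sum_ite_mem Finset.univ s (fun i => w i * G i)]
    refine Finset.sum_congr rfl fun i _ => ?_
    by_cases h : i ∈ s <;> simp [hw'def, h]
  set e := S.orderIsoOfFin rfl with hedef
  have hdepF : ∀ j : ℕ, j ≤ d → ∑ k : Fin S.card, w' (e k) * t (e k).val ^ j = 0 := by
    intro j hj
    have hconv : ∑ k : Fin S.card, w' (e k) * t (e k).val ^ j
        = ∑ i : {x // x ∈ S}, w' i * t i.val ^ j :=
      Equiv.sum_comp e.toEquiv (fun i => w' i * t i.val ^ j)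
    rw [hconv, hsum' (fun i => t i.val ^ j)]
    rcases Nat.eq_zero_or_pos j with rfl | hjpos
    · simp only [pow_zero, mul_one]
      exact hw
    · have hcoord := congrFun hcomb ⟨j - 1, by omega⟩
      rw [Finset.sum_apply] at hcoord
      simp only [Pi.smul_apply, momentCurve, smul_eq_mul, Pi.zero_apply] at hcoord
      have hj1 : j - 1 + 1 = j := by omega
      rw [hj1] at hcoord
      exact hcoord
  have hvan := dep_vanish (n := S.card) (by omega) (fun k => t (e k).val) (fun k => w' (e k))
    (ht.injective.comp (Subtype.coe_injective.comp (e.injective)))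
    hdepF
  intro i hi
  have h9 := hvan (e.symm i)
  rw [OrderIso.apply_symm_apply] at h9
  simpa [hw'def, hi] using h9

lemma moment_simplex_desc {d n : ℕ} {t : Fin n → ℝ} (ht : StrictMono t)
    (S : Finset (Fin n)) (hne : S.Nonempty) (hS : S.card ≤ d + 1) :
    intrinsicInterior ℝ (convexHull ℝ ((fun i => momentCurve d (t i)) '' S)) =
      {x | ∃ w : {i // i ∈ S} → ℝ, (∀ i, 0 < w i) ∧ ∑ i, w i = 1 ∧
        ∑ i, w i • momentCurve d (t i.val) = x} := by
  have hne' : Nonempty {i // i ∈ S} := ⟨⟨hne.choose, hne.choose_spec⟩⟩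
  have himg : ((fun i => momentCurve d (t i)) '' (S : Set (Fin n)) : Set (Fin d → ℝ))
      = Set.range (fun i : {i // i ∈ S} => momentCurve d (t i.val)) :=
    Set.image_eq_range _ _
  rw [himg]
  exact intrinsicInterior_simplex (momentAffineIndep ht S hS)

/-- For 2d points on the moment curve colored red/blue (d each, smallest parameter red),
the red and blue (d-1)-simplices cross iff the color sequence contains an alternating
subsequence of length d+2. -/
lemma sign_norm {P : Prop} [Decidable P] {w : ℝ} (hw : w ≠ 0) :
    (0 < (if (P ↔ 0 < w) then (1:ℝ) else -1) * w ↔ P) := by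
  rcases lt_or_gt_of_ne hw with hneg | hpos
  · by_cases hP : P
    · rw [if_neg (fun hiff => absurd ((hiff : P ↔ 0 < w).mp hP) (not_lt.mpr hneg.le))]
      exact iff_of_true (by nlinarith) hP
    · rw [if_pos (iff_of_false hP (not_lt.mpr hneg.le)), one_mul]
      exact iff_of_false (not_lt.mpr hneg.le) hP
  · by_cases hP : P
    · rw [if_pos (iff_of_true hP hpos), one_mul]
      exact iff_of_true hpos hP
    · rw [if_neg (fun hiff => hP ((hiff : P ↔ 0 < w).mpr hpos))]
      exact iff_of_false (by nlinarith) hP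

theorem moment_curve_red_blue_crossing (d : ℕ) (hd : 2 ≤ d)
    (t : Fin (2 * d) → ℝ) (ht : StrictMono t)
    (red : Finset (Fin (2 * d))) (hred : red.card = d)
    (h0 : (⟨0, by omega⟩ : Fin (2 * d)) ∈ red) :
    (intrinsicInterior ℝ (convexHull ℝ ((fun i => momentCurve d (t i)) '' red)) ∩
     intrinsicInterior ℝ
       (convexHull ℝ ((fun i => momentCurve d (t i)) '' (redᶜ : Finset (Fin (2 * d)))))).Nonempty ↔
    ∃ f : Fin (d + 2) → Fin (2 * d), StrictMono f ∧
      ∀ k : Fin (d + 1), (f k.castSucc ∈ red ↔ f k.succ ∉ red) := by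
  classical
  have hbcard : (redᶜ : Finset (Fin (2*d))).card = d := by
    rw [Finset.card_compl, Fintype.card_fin, hred]
    omega
  have hrne : red.Nonempty := Finset.card_pos.mp (by omega)
  have hbne : (redᶜ : Finset (Fin (2*d))).Nonempty := Finset.card_pos.mp (by omega)
  have hdesc_r := moment_simplex_desc (d := d) ht red hrne (by omega)
  have hdesc_b := moment_simplex_desc (d := d) ht redᶜ hbne (by omega)
  constructor
  · rintro ⟨x, hx1, hx2⟩
    rw [hdesc_r] at hx1
    rw [hdesc_b] at hx2
    obtain ⟨wr, hwrpos, hwrsum, hwrcomb⟩ := hx1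
    obtain ⟨wb, hwbpos, hwbsum, hwbcomb⟩ := hx2
    set c : Fin (2*d) → ℝ :=
      fun i => if h : i ∈ red then wr ⟨i, h⟩ else -wb ⟨i, Finset.mem_compl.mpr h⟩ with hcdef
    have hcpos : ∀ i, i ∈ red → 0 < c i := by
      intro i h; simp only [hcdef]; rw [dif_pos h]; exact hwrpos _
    have hcneg : ∀ i, i ∉ red → c i < 0 := by
      intro i h; simp only [hcdef]; rw [dif_neg h]; exact neg_neg_of_pos (hwbpos _)
    have hcne : ∀ i, c i ≠ 0 := fun i => by
      by_cases h : i ∈ red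
      · exact ne_of_gt (hcpos i h)
      · exact ne_of_lt (hcneg i h)
    have hsplit : ∀ F : Fin (2*d) → ℝ,
        ∑ i, c i * F i = ∑ r : {i // i ∈ red}, wr r * F r.val
          + ∑ b : {i // i ∈ (redᶜ : Finset (Fin (2*d)))}, -wb b * F b.val := by
      intro F
      rw [← Finset.sum_add_sum_compl red (fun i => c i * F i)]
      congr 1
      · rw [Finset.sum_coe_sort red (fun i => c i * F i) |>.symm]
        refine Finset.sum_congr rfl fun r _ => ?_
        simp only [hcdef]
        rw [dif_pos r.2, Subtype.coe_eta]
      · rw [Finset.sum_coe_sort redᶜ (fun i => c i * F i) |>.symm]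
        refine Finset.sum_congr rfl fun b _ => ?_
        have hb : (b : Fin (2*d)) ∉ red := Finset.mem_compl.mp b.2
        simp only [hcdef]
        rw [dif_neg hb, Subtype.coe_eta]
    have hdepP : ∀ j : ℕ, j ≤ d → ∑ i, c i * t i ^ j = 0 := by
      intro j hj
      rw [hsplit (fun i => t i ^ j)]
      rcases Nat.eq_zero_or_pos j with rfl | hjpos
      · simp only [pow_zero, mul_one]
        have h1 : ∑ b : {i // i ∈ (redᶜ : Finset (Fin (2*d)))}, -wb b = -1 := by
          rw [Finset.sum_neg_distrib, hwbsum]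
        rw [hwrsum, h1]
        norm_num
      · have hxeq : (∑ r : {i // i ∈ red}, wr r • momentCurve d (t r.val))
            = ∑ b : {i // i ∈ (redᶜ : Finset (Fin (2*d)))}, wb b • momentCurve d (t b.val) :=
          hwrcomb.trans hwbcomb.symm
        have hcoord := congrFun hxeq ⟨j-1, by omega⟩
        rw [Finset.sum_apply, Finset.sum_apply] at hcoord
        simp only [Pi.smul_apply, momentCurve, smul_eq_mul] at hcoord
        have hj1 : j - 1 + 1 = j := by omega
        rw [hj1] at hcoord
        have h2 : ∑ b : {i // i ∈ (redᶜ : Finset (Fin (2*d)))}, -wb b * t b.val ^ j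
            = -∑ b : {i // i ∈ (redᶜ : Finset (Fin (2*d)))}, wb b * t b.val ^ j := by
          rw [← Finset.sum_neg_distrib]
          exact Finset.sum_congr rfl fun b _ => by ring
        rw [h2]
        linarith [hcoord]
    set sN : ℕ → ℝ := fun i => if h : i < 2*d then t ⟨i, h⟩ else 0 with hsNdef
    set cN : ℕ → ℝ := fun i => if h : i < 2*d then c ⟨i, h⟩ else 0 with hcNdef
    obtain ⟨g, hgmono, hgb, hgalt⟩ := alternating_of_dep (d := d) (n := 2*d) (by omega) sN
      (fun i j hij hj => by
        simp only [hsNdef]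
        rw [dif_pos (lt_trans hij hj), dif_pos hj]
        exact ht (Fin.mk_lt_mk.mpr hij))
      cN (fun i hi => by simp only [hcNdef]; rw [dif_pos hi]; exact hcne _)
      (by
        intro q hq
        have hconv : ∑ i ∈ Finset.range (2*d), cN i * q.eval (sN i)
            = ∑ k : Fin (2*d), c k * q.eval (t k) := by
          rw [Finset.sum_range fun i => cN i * q.eval (sN i)]
          refine Finset.sum_congr rfl fun k _ => ?_
          simp only [hcNdef, hsNdef]
          rw [dif_pos k.isLt, dif_pos k.isLt]
        rw [hconv]
        exact sum_mul_eval t c hdepP q hq)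
    refine ⟨fun k => ⟨g k, hgb k⟩, ?_, ?_⟩
    · intro a b hab
      exact Fin.mk_lt_mk.mpr (hgmono hab)
    · intro k
      have halt := hgalt k
      have e1 : cN (g k.castSucc) = c ⟨g k.castSucc, hgb _⟩ := by
        simp only [hcNdef]; rw [dif_pos (hgb _)]
      have e2 : cN (g k.succ) = c ⟨g k.succ, hgb _⟩ := by
        simp only [hcNdef]; rw [dif_pos (hgb _)]
      rw [e1, e2] at halt
      have hiff := sign_flip halt
      constructor
      · intro hmem hmem2
        exact (hiff.mp (hcpos _ hmem)) (hcpos _ hmem2)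
      · intro hnmem
        by_contra hnc
        have ha := hcneg _ hnc
        have hb := hcneg _ hnmem
        nlinarith [halt]
  · rintro ⟨f, hf, haltc⟩
    set A : Finset (Fin (2*d)) := Finset.image f Finset.univ with hAdef
    have hfinj : Function.Injective f := hf.injective
    have hAcard : A.card = d + 2 := by
      rw [hAdef, Finset.card_image_of_injective _ hfinj, Finset.card_univ, Fintype.card_fin]
    have hfA : ∀ k, f k ∈ A := fun k => Finset.mem_image_of_mem f (Finset.mem_univ k)
    obtain ⟨w0, hdep0, hnz0, halt0⟩ := exists_circuit (fun k => t (f k)) (ht.comp hf)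
    set σ0 : ℝ := if (f 0 ∈ red ↔ 0 < w0 0) then 1 else -1 with hσ0def
    set c0 : Fin (2*d) → ℝ := fun i => σ0 * spread f w0 i with hc0def
    have hσ0ne : σ0 ≠ 0 := by rw [hσ0def]; split <;> norm_num
    have hσ0sq : σ0 * σ0 = 1 := by rw [hσ0def]; split <;> norm_num
    have hc0app : ∀ k, c0 (f k) = σ0 * w0 k := by
      intro k; simp only [hc0def]; rw [spread_apply_mem hfinj]
    have hc0out : ∀ i, i ∉ A → c0 i = 0 := by
      intro i hi
      simp only [hc0def]
      rw [spread_apply_not_mem w0 (fun k hk => hi (by rw [← hk]; exact hfA k)), mul_zero]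
    have hc0ne : ∀ k, c0 (f k) ≠ 0 := fun k => by
      rw [hc0app]; exact mul_ne_zero hσ0ne (hnz0 k)
    have hc0sign : ∀ k, (0 < c0 (f k) ↔ f k ∈ red) := by
      intro k
      induction k using Fin.induction with
      | zero =>
        rw [hc0app, hσ0def]
        exact sign_norm (hnz0 0)
      | succ k ih =>
        have hflip : c0 (f k.castSucc) * c0 (f k.succ) < 0 := by
          rw [hc0app, hc0app]
          have heq : (σ0 * w0 k.castSucc) * (σ0 * w0 k.succ)
              = (σ0 * σ0) * (w0 k.castSucc * w0 k.succ) := by ring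
          rw [heq, hσ0sq, one_mul]
          exact halt0 k
        have hs := sign_flip hflip
        have hcolor := haltc k
        constructor
        · intro hp
          by_contra hn
          exact (hs.mp (ih.mpr (hcolor.mpr hn))) hp
        · intro hmem
          by_contra hnp
          have hcnot : f k.castSucc ∉ red := fun hc => (hcolor.mp hc) hmem
          have hnc : ¬ 0 < c0 (f k.castSucc) := fun hp => hcnot (ih.mp hp)
          exact hnc (hs.mpr hnp)
    set m0 : ℝ := Finset.univ.inf' Finset.univ_nonempty (fun k : Fin (d+2) => |c0 (f k)|)
      with hm0def
    have hm0pos : 0 < m0 := by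
      rw [hm0def, Finset.lt_inf'_iff]
      intro k _
      exact abs_pos.mpr (hc0ne k)
    have hm0le : ∀ k, m0 ≤ |c0 (f k)| := fun k => Finset.inf'_le _ (Finset.mem_univ k)
    set δ : ℝ := m0 / (2*d+1) with hδdef
    have hδpos : 0 < δ := div_pos hm0pos (by positivity)
    have hcirc : ∀ x : Fin (2*d), x ∉ A → ∃ cc : Fin (2*d) → ℝ,
        (∀ j : ℕ, j ≤ d → ∑ i, cc i * t i ^ j = 0) ∧ (∀ i, cc i ≠ 0 → i ∈ insert x A) ∧
        (0 < cc x ↔ x ∈ red) ∧ cc x ≠ 0 ∧ (∀ i, |cc i| ≤ δ) := by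
      intro x hx
      set B : Finset (Fin (2*d)) := insert x (A.erase (f 0)) with hBdef
      have hBsub : B ⊆ insert x A := by
        rw [hBdef]
        exact Finset.insert_subset_insert x (Finset.erase_subset _ _)
      have hBcard : B.card = d + 2 := by
        rw [hBdef, Finset.card_insert_of_notMem (fun h => hx (Finset.erase_subset _ _ h)),
          Finset.card_erase_of_mem (hfA 0), hAcard]
        omega
      set e := B.orderIsoOfFin hBcard with hedef
      set gx : Fin (d+2) → Fin (2*d) := fun k => (e k).val with hgxdef
      have hgxmono : StrictMono gx := fun a b h => e.strictMono h
      have hgxinj := hgxmono.injective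
      obtain ⟨wx, hdepx, hnzx, -⟩ := exists_circuit (fun k => t (gx k)) (ht.comp hgxmono)
      have hxB : x ∈ B := Finset.mem_insert_self _ _
      set kx := e.symm ⟨x, hxB⟩ with hkxdef
      have hgkx : gx kx = x := by
        show ((e (e.symm ⟨x, hxB⟩)) : Fin (2*d)) = x
        rw [OrderIso.apply_symm_apply]
      set σx : ℝ := if (x ∈ red ↔ 0 < wx kx) then 1 else -1 with hσxdef
      have hσxne : σx ≠ 0 := by rw [hσxdef]; split <;> norm_num
      set Mx : ℝ := ∑ i, |σx * spread gx wx i| with hMxdef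
      have hMxnn : 0 ≤ Mx := Finset.sum_nonneg fun i _ => abs_nonneg _
      have hfac : 0 < δ / (1 + Mx) := div_pos hδpos (by linarith)
      set cc : Fin (2*d) → ℝ := fun i => (δ / (1 + Mx)) * (σx * spread gx wx i) with hccdef
      have hccx : cc x = (δ / (1 + Mx)) * (σx * wx kx) := by
        simp only [hccdef]
        rw [← hgkx, spread_apply_mem hgxinj]
      refine ⟨cc, ?_, ?_, ?_, ?_, ?_⟩
      · intro j hj
        have hsum1 : ∑ i, cc i * t i ^ j
            = (δ / (1 + Mx)) * σx * ∑ i, spread gx wx i * t i ^ j := by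
          rw [Finset.mul_sum]
          exact Finset.sum_congr rfl fun i _ => by simp only [hccdef]; ring
        rw [hsum1, sum_spread_mul gx wx (fun i => t i ^ j), hdepx j hj, mul_zero]
      · intro i hi
        by_contra hni
        apply hi
        have hsp : spread gx wx i = 0 := by
          refine spread_apply_not_mem wx (fun k hk => ?_)
          exact hni (hk ▸ hBsub (e k).2)
        simp only [hccdef]
        rw [hsp, mul_zero, mul_zero]
      · rw [hccx]
        rw [mul_pos_iff_of_pos_left hfac]
        rw [hσxdef]
        exact sign_norm (hnzx kx)
      · rw [hccx]
        exact mul_ne_zero (ne_of_gt hfac) (mul_ne_zero hσxne (hnzx kx))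
      · intro i
        simp only [hccdef]
        rw [abs_mul, abs_of_pos hfac]
        have h1 : |σx * spread gx wx i| ≤ Mx :=
          Finset.single_le_sum (f := fun i => |σx * spread gx wx i|)
            (fun i _ => abs_nonneg _) (Finset.mem_univ i)
        calc δ / (1 + Mx) * |σx * spread gx wx i| ≤ δ / (1 + Mx) * (1 + Mx) := by
              apply mul_le_mul_of_nonneg_left _ (le_of_lt hfac)
              linarith
          _ = δ := div_mul_cancel₀ δ (by linarith)
    choose! cc hcc1 hcc2 hcc3 hcc4 hcc5 using hcirc
    set c : Fin (2*d) → ℝ := fun i => c0 i + ∑ x ∈ Aᶜ, cc x i with hcdef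
    have hpert : ∀ i, |∑ x ∈ Aᶜ, cc x i| < m0 := by
      intro i
      have hcardle : ((Aᶜ : Finset (Fin (2*d))).card : ℝ) ≤ 2*d := by
        have h9 : (Aᶜ : Finset (Fin (2*d))).card ≤ 2*d := by
          simpa using Finset.card_le_univ (Aᶜ : Finset (Fin (2*d)))
        exact_mod_cast h9
      have h2d : (0:ℝ) < 2*d+1 := by positivity
      calc |∑ x ∈ Aᶜ, cc x i| ≤ ∑ x ∈ Aᶜ, |cc x i| := Finset.abs_sum_le_sum_abs _ _
        _ ≤ ∑ _x ∈ Aᶜ, δ :=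
            Finset.sum_le_sum fun x hx => hcc5 x (Finset.mem_compl.mp hx) i
        _ = (Aᶜ : Finset (Fin (2*d))).card * δ := by rw [Finset.sum_const, nsmul_eq_mul]
        _ ≤ (2*d) * δ := mul_le_mul_of_nonneg_right hcardle (le_of_lt hδpos)
        _ < m0 := by
            have hlt : (2*(d:ℝ))/(2*d+1) < 1 := by
              rw [div_lt_one h2d]; linarith
            calc 2*(d:ℝ) * δ = m0 * (2*d/(2*d+1)) := by rw [hδdef]; ring
              _ < m0 * 1 := mul_lt_mul_of_pos_left hlt hm0pos
              _ = m0 := mul_one m0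
    have hcsign : ∀ i, (0 < c i ↔ i ∈ red) ∧ c i ≠ 0 := by
      intro i
      by_cases hiA : i ∈ A
      · obtain ⟨k, -, rfl⟩ := Finset.mem_image.mp hiA
        have hsign := hc0sign k
        have hb := abs_lt.mp (hpert (f k))
        have hm := hm0le k
        have hane := hc0ne k
        have hci : c (f k) = c0 (f k) + ∑ x ∈ Aᶜ, cc x (f k) := rfl
        rcases abs_cases (c0 (f k)) with ⟨heq, hge⟩ | ⟨heq, hlt⟩
        · have hapos : 0 < c0 (f k) := lt_of_le_of_ne hge (Ne.symm hane)
          have hcpos : 0 < c (f k) := by rw [hci]; linarith [hm.trans_eq heq]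
          exact ⟨iff_of_true hcpos (hsign.mp hapos), ne_of_gt hcpos⟩
        · have hcneg : c (f k) < 0 := by rw [hci]; linarith [hm.trans_eq heq]
          refine ⟨iff_of_false (not_lt.mpr (le_of_lt hcneg)) ?_, ne_of_lt hcneg⟩
          intro hmem
          exact absurd (hsign.mpr hmem) (not_lt.mpr (le_of_lt hlt))
      · have hc0i : c0 i = 0 := hc0out i hiA
        have hsum1 : ∑ x ∈ Aᶜ, cc x i = cc i i := by
          rw [Finset.sum_eq_single i]
          · intro x hxmem hxne
            by_contra hne0
            have hmem := hcc2 x (Finset.mem_compl.mp hxmem) i hne0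
            rcases Finset.mem_insert.mp hmem with h | h
            · exact hxne h.symm
            · exact hiA h
          · intro hni
            exact absurd (Finset.mem_compl.mpr hiA) hni
        have hci : c i = c0 i + ∑ x ∈ Aᶜ, cc x i := rfl
        rw [hci, hc0i, hsum1, zero_add]
        exact ⟨hcc3 i hiA, hcc4 i hiA⟩
    have hdepC : ∀ j : ℕ, j ≤ d → ∑ i, c i * t i ^ j = 0 := by
      intro j hj
      have hexp : ∑ i, c i * t i ^ j
          = ∑ i, c0 i * t i ^ j + ∑ x ∈ Aᶜ, ∑ i, cc x i * t i ^ j := by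
        simp only [hcdef, add_mul, Finset.sum_add_distrib, Finset.sum_mul]
        congr 1
        rw [Finset.sum_comm]
      have hc0dep : ∑ i, c0 i * t i ^ j = 0 := by
        have h3 : ∑ i, c0 i * t i ^ j = σ0 * ∑ i, spread f w0 i * t i ^ j := by
          rw [Finset.mul_sum]
          exact Finset.sum_congr rfl fun i _ => by simp only [hc0def]; ring
        rw [h3, sum_spread_mul f w0 (fun i => t i ^ j), hdep0 j hj, mul_zero]
      rw [hexp, hc0dep, zero_add]
      exact Finset.sum_eq_zero fun x hx => hcc1 x (Finset.mem_compl.mp hx) j hj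
    set Ssum : ℝ := ∑ i ∈ red, c i with hSdef
    have hSpos : 0 < Ssum :=
      Finset.sum_pos (fun i hi => ((hcsign i).1.mpr hi)) hrne
    have htotal : ∑ i, c i = 0 := by
      have h4 := hdepC 0 (by omega)
      simpa using h4
    have hbsum : ∑ i ∈ redᶜ, c i = -Ssum := by
      have h5 := Finset.sum_add_sum_compl red (fun i => c i)
      rw [htotal] at h5
      simp only [hSdef]
      linarith
    set wr : {i // i ∈ red} → ℝ := fun i => c i.val / Ssum with hwrdef
    set wb : {i // i ∈ (redᶜ : Finset (Fin (2*d)))} → ℝ := fun i => -c i.val / Ssum with hwbdef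
    set x : Fin d → ℝ := ∑ r : {i // i ∈ red}, wr r • momentCurve d (t r.val) with hxdef
    refine ⟨x, ?_, ?_⟩
    · rw [hdesc_r]
      refine ⟨wr, ?_, ?_, rfl⟩
      · intro i
        exact div_pos ((hcsign i.val).1.mpr i.2) hSpos
      · have h6 : ∑ i : {i // i ∈ red}, wr i = (∑ i ∈ red, c i) / Ssum := by
          rw [← Finset.sum_coe_sort red (fun i => c i), ← Finset.sum_div]
        rw [h6, hSdef, div_self (ne_of_gt hSpos)]
    · rw [hdesc_b]
      refine ⟨wb, ?_, ?_, ?_⟩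
      · intro i
        have hni : i.val ∉ red := Finset.mem_compl.mp i.2
        have h7 := (hcsign i.val).1
        have h8 := (hcsign i.val).2
        have hneg : c i.val < 0 :=
          lt_of_le_of_ne (not_lt.mp (fun hp => hni (h7.mp hp))) h8
        simp only [hwbdef]
        exact div_pos (by linarith) hSpos
      · have h6 : ∑ i : {i // i ∈ (redᶜ : Finset (Fin (2*d)))}, wb i
            = (∑ i ∈ redᶜ, -c i) / Ssum := by
          rw [← Finset.sum_coe_sort redᶜ (fun i => -c i), ← Finset.sum_div]
        rw [h6, Finset.sum_neg_distrib, hbsum, neg_neg, div_self (ne_of_gt hSpos)]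
      · funext j
        rw [hxdef, Finset.sum_apply, Finset.sum_apply]
        simp only [Pi.smul_apply, momentCurve, smul_eq_mul]
        have hd1 := hdepC (j.val + 1) (by omega)
        rw [← Finset.sum_add_sum_compl red (fun i => c i * t i ^ (j.val + 1))] at hd1
        have e1 : ∑ b : {i // i ∈ (redᶜ : Finset (Fin (2*d)))}, wb b * t b.val ^ (j.val + 1)
            = (-(∑ i ∈ redᶜ, c i * t i ^ (j.val + 1))) / Ssum := by
          calc ∑ b : {i // i ∈ (redᶜ : Finset (Fin (2*d)))}, wb b * t b.val ^ (j.val + 1)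
              = ∑ b : {i // i ∈ (redᶜ : Finset (Fin (2*d)))},
                  (-(c b.val * t b.val ^ (j.val + 1))) / Ssum :=
                Finset.sum_congr rfl fun b _ => by simp only [hwbdef]; ring
            _ = (∑ b : {i // i ∈ (redᶜ : Finset (Fin (2*d)))},
                  -(c b.val * t b.val ^ (j.val + 1))) / Ssum := by rw [← Finset.sum_div]
            _ = (-(∑ b : {i // i ∈ (redᶜ : Finset (Fin (2*d)))},
                  c b.val * t b.val ^ (j.val + 1))) / Ssum := by rw [Finset.sum_neg_distrib]
            _ = (-(∑ i ∈ redᶜ, c i * t i ^ (j.val + 1))) / Ssum := by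
                rw [Finset.sum_coe_sort redᶜ (fun i => c i * t i ^ (j.val + 1))]
        have e2 : ∑ r : {i // i ∈ red}, wr r * t r.val ^ (j.val + 1)
            = (∑ i ∈ red, c i * t i ^ (j.val + 1)) / Ssum := by
          calc ∑ r : {i // i ∈ red}, wr r * t r.val ^ (j.val + 1)
              = ∑ r : {i // i ∈ red}, (c r.val * t r.val ^ (j.val + 1)) / Ssum :=
                Finset.sum_congr rfl fun r _ => by simp only [hwrdef]; ring
            _ = (∑ r : {i // i ∈ red}, c r.val * t r.val ^ (j.val + 1)) / Ssum := by
                rw [← Finset.sum_div]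
            _ = (∑ i ∈ red, c i * t i ^ (j.val + 1)) / Ssum := by
                rw [Finset.sum_coe_sort red (fun i => c i * t i ^ (j.val + 1))]
        rw [e1, e2]
        congr 1
        linarith
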